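/- For the dichopile representation with B = 2 and 6×6 matrices A_0, A_1 (given explicitly, both with {0,1} entries), the maximum over all words w of length T of the maximum-absolute-column-sum norm ‖A_w‖_1 equals T + 1 for every T ≥ 1. Consequently the joint spectral radius of {A_0, A_1} equals 1. -/

import Mathlib

open Matrix

/-- The two matrices of the dichopile linear representation. -/
def dichoA : Fin 2 → Matrix (Fin 6) (Fin 6) ℝ
  | 0 => !![0,0,0,0,0,0; 1,0,0,1,0,0; 0,0,1,0,0,0; 0,1,0,0,0,0; 0,0,0,0,1,0; 1,1,0,0,0,1]
  | 1 => !![0,0,1,0,0,0; 0,1,0,0,0,0; 1,0,0,1,0,0; 0,0,0,0,0,0; 1,0,0,0,1,1; 0,1,0,0,0,0]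

/-- Maximum absolute column sum norm of a matrix. -/
noncomputable def colSumNorm (M : Matrix (Fin 6) (Fin 6) ℝ) : ℝ :=
  Finset.univ.sup' Finset.univ_nonempty fun j => ∑ i : Fin 6, |M i j|

/-- Maximum of `‖A_w‖₁` over all words of length `T`. -/
noncomputable def dichoMax (T : ℕ) : ℝ :=
  Finset.univ.sup' Finset.univ_nonempty
    fun w : Fin T → Fin 2 => colSumNorm (List.ofFn fun i => dichoA (w i)).prod

noncomputable def wprod (l : List (Fin 2)) : Matrix (Fin 6) (Fin 6) ℝ := (l.map dichoA).prod

noncomputable def cs (l : List (Fin 2)) (j : Fin 6) : ℝ := ∑ i : Fin 6, wprod l i j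

lemma dichoA_nonneg (c : Fin 2) (i j : Fin 6) : 0 ≤ dichoA c i j := by
  fin_cases c <;> fin_cases i <;> fin_cases j <;> norm_num [dichoA]

lemma wprod_nonneg (l : List (Fin 2)) (i j : Fin 6) : 0 ≤ wprod l i j := by
  induction l generalizing i j with
  | nil => simp [wprod, Matrix.one_apply]; positivity
  | cons c l ih =>
      have : wprod (c :: l) = dichoA c * wprod l := by
        simp [wprod, List.prod_cons]
      rw [this, Matrix.mul_apply]
      exact Finset.sum_nonneg fun k _ => mul_nonneg (dichoA_nonneg c i k) (ih k j)

lemma cs_concat (l : List (Fin 2)) (c : Fin 2) (j : Fin 6) :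
    cs (l ++ [c]) j = ∑ k : Fin 6, cs l k * dichoA c k j := by
  have h : wprod (l ++ [c]) = wprod l * dichoA c := by
    simp [wprod, List.prod_append]
  simp only [cs, h, Matrix.mul_apply]
  rw [Finset.sum_comm]
  simp [Finset.sum_mul]

@[simp] lemma dA_0_0_0 : dichoA 0 0 0 = (0:ℝ) := rfl
@[simp] lemma dA_0_0_1 : dichoA 0 0 1 = (0:ℝ) := rfl
@[simp] lemma dA_0_0_2 : dichoA 0 0 2 = (0:ℝ) := rfl
@[simp] lemma dA_0_0_3 : dichoA 0 0 3 = (0:ℝ) := rfl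
@[simp] lemma dA_0_0_4 : dichoA 0 0 4 = (0:ℝ) := rfl
@[simp] lemma dA_0_0_5 : dichoA 0 0 5 = (0:ℝ) := rfl
@[simp] lemma dA_0_1_0 : dichoA 0 1 0 = (1:ℝ) := rfl
@[simp] lemma dA_0_1_1 : dichoA 0 1 1 = (0:ℝ) := rfl
@[simp] lemma dA_0_1_2 : dichoA 0 1 2 = (0:ℝ) := rfl
@[simp] lemma dA_0_1_3 : dichoA 0 1 3 = (1:ℝ) := rfl
@[simp] lemma dA_0_1_4 : dichoA 0 1 4 = (0:ℝ) := rfl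
@[simp] lemma dA_0_1_5 : dichoA 0 1 5 = (0:ℝ) := rfl
@[simp] lemma dA_0_2_0 : dichoA 0 2 0 = (0:ℝ) := rfl
@[simp] lemma dA_0_2_1 : dichoA 0 2 1 = (0:ℝ) := rfl
@[simp] lemma dA_0_2_2 : dichoA 0 2 2 = (1:ℝ) := rfl
@[simp] lemma dA_0_2_3 : dichoA 0 2 3 = (0:ℝ) := rfl
@[simp] lemma dA_0_2_4 : dichoA 0 2 4 = (0:ℝ) := rfl
@[simp] lemma dA_0_2_5 : dichoA 0 2 5 = (0:ℝ) := rfl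
@[simp] lemma dA_0_3_0 : dichoA 0 3 0 = (0:ℝ) := rfl
@[simp] lemma dA_0_3_1 : dichoA 0 3 1 = (1:ℝ) := rfl
@[simp] lemma dA_0_3_2 : dichoA 0 3 2 = (0:ℝ) := rfl
@[simp] lemma dA_0_3_3 : dichoA 0 3 3 = (0:ℝ) := rfl
@[simp] lemma dA_0_3_4 : dichoA 0 3 4 = (0:ℝ) := rfl
@[simp] lemma dA_0_3_5 : dichoA 0 3 5 = (0:ℝ) := rfl
@[simp] lemma dA_0_4_0 : dichoA 0 4 0 = (0:ℝ) := rfl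
@[simp] lemma dA_0_4_1 : dichoA 0 4 1 = (0:ℝ) := rfl
@[simp] lemma dA_0_4_2 : dichoA 0 4 2 = (0:ℝ) := rfl
@[simp] lemma dA_0_4_3 : dichoA 0 4 3 = (0:ℝ) := rfl
@[simp] lemma dA_0_4_4 : dichoA 0 4 4 = (1:ℝ) := rfl
@[simp] lemma dA_0_4_5 : dichoA 0 4 5 = (0:ℝ) := rfl
@[simp] lemma dA_0_5_0 : dichoA 0 5 0 = (1:ℝ) := rfl
@[simp] lemma dA_0_5_1 : dichoA 0 5 1 = (1:ℝ) := rfl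
@[simp] lemma dA_0_5_2 : dichoA 0 5 2 = (0:ℝ) := rfl
@[simp] lemma dA_0_5_3 : dichoA 0 5 3 = (0:ℝ) := rfl
@[simp] lemma dA_0_5_4 : dichoA 0 5 4 = (0:ℝ) := rfl
@[simp] lemma dA_0_5_5 : dichoA 0 5 5 = (1:ℝ) := rfl
@[simp] lemma dA_1_0_0 : dichoA 1 0 0 = (0:ℝ) := rfl
@[simp] lemma dA_1_0_1 : dichoA 1 0 1 = (0:ℝ) := rfl
@[simp] lemma dA_1_0_2 : dichoA 1 0 2 = (1:ℝ) := rfl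
@[simp] lemma dA_1_0_3 : dichoA 1 0 3 = (0:ℝ) := rfl
@[simp] lemma dA_1_0_4 : dichoA 1 0 4 = (0:ℝ) := rfl
@[simp] lemma dA_1_0_5 : dichoA 1 0 5 = (0:ℝ) := rfl
@[simp] lemma dA_1_1_0 : dichoA 1 1 0 = (0:ℝ) := rfl
@[simp] lemma dA_1_1_1 : dichoA 1 1 1 = (1:ℝ) := rfl
@[simp] lemma dA_1_1_2 : dichoA 1 1 2 = (0:ℝ) := rfl
@[simp] lemma dA_1_1_3 : dichoA 1 1 3 = (0:ℝ) := rfl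
@[simp] lemma dA_1_1_4 : dichoA 1 1 4 = (0:ℝ) := rfl
@[simp] lemma dA_1_1_5 : dichoA 1 1 5 = (0:ℝ) := rfl
@[simp] lemma dA_1_2_0 : dichoA 1 2 0 = (1:ℝ) := rfl
@[simp] lemma dA_1_2_1 : dichoA 1 2 1 = (0:ℝ) := rfl
@[simp] lemma dA_1_2_2 : dichoA 1 2 2 = (0:ℝ) := rfl
@[simp] lemma dA_1_2_3 : dichoA 1 2 3 = (1:ℝ) := rfl
@[simp] lemma dA_1_2_4 : dichoA 1 2 4 = (0:ℝ) := rfl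
@[simp] lemma dA_1_2_5 : dichoA 1 2 5 = (0:ℝ) := rfl
@[simp] lemma dA_1_3_0 : dichoA 1 3 0 = (0:ℝ) := rfl
@[simp] lemma dA_1_3_1 : dichoA 1 3 1 = (0:ℝ) := rfl
@[simp] lemma dA_1_3_2 : dichoA 1 3 2 = (0:ℝ) := rfl
@[simp] lemma dA_1_3_3 : dichoA 1 3 3 = (0:ℝ) := rfl
@[simp] lemma dA_1_3_4 : dichoA 1 3 4 = (0:ℝ) := rfl
@[simp] lemma dA_1_3_5 : dichoA 1 3 5 = (0:ℝ) := rfl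
@[simp] lemma dA_1_4_0 : dichoA 1 4 0 = (1:ℝ) := rfl
@[simp] lemma dA_1_4_1 : dichoA 1 4 1 = (0:ℝ) := rfl
@[simp] lemma dA_1_4_2 : dichoA 1 4 2 = (0:ℝ) := rfl
@[simp] lemma dA_1_4_3 : dichoA 1 4 3 = (0:ℝ) := rfl
@[simp] lemma dA_1_4_4 : dichoA 1 4 4 = (1:ℝ) := rfl
@[simp] lemma dA_1_4_5 : dichoA 1 4 5 = (1:ℝ) := rfl
@[simp] lemma dA_1_5_0 : dichoA 1 5 0 = (0:ℝ) := rfl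
@[simp] lemma dA_1_5_1 : dichoA 1 5 1 = (1:ℝ) := rfl
@[simp] lemma dA_1_5_2 : dichoA 1 5 2 = (0:ℝ) := rfl
@[simp] lemma dA_1_5_3 : dichoA 1 5 3 = (0:ℝ) := rfl
@[simp] lemma dA_1_5_4 : dichoA 1 5 4 = (0:ℝ) := rfl
@[simp] lemma dA_1_5_5 : dichoA 1 5 5 = (0:ℝ) := rfl

lemma cs_step_0_0 (l : List (Fin 2)) : cs (l ++ [0]) 0 = cs l 1 + cs l 5 := by
  rw [cs_concat, Fin.sum_univ_six]; norm_num
lemma cs_step_0_1 (l : List (Fin 2)) : cs (l ++ [0]) 1 = cs l 3 + cs l 5 := by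
  rw [cs_concat, Fin.sum_univ_six]; norm_num
lemma cs_step_0_2 (l : List (Fin 2)) : cs (l ++ [0]) 2 = cs l 2 := by
  rw [cs_concat, Fin.sum_univ_six]; norm_num
lemma cs_step_0_3 (l : List (Fin 2)) : cs (l ++ [0]) 3 = cs l 1 := by
  rw [cs_concat, Fin.sum_univ_six]; norm_num
lemma cs_step_0_4 (l : List (Fin 2)) : cs (l ++ [0]) 4 = cs l 4 := by
  rw [cs_concat, Fin.sum_univ_six]; norm_num
lemma cs_step_0_5 (l : List (Fin 2)) : cs (l ++ [0]) 5 = cs l 5 := by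
  rw [cs_concat, Fin.sum_univ_six]; norm_num
lemma cs_step_1_0 (l : List (Fin 2)) : cs (l ++ [1]) 0 = cs l 2 + cs l 4 := by
  rw [cs_concat, Fin.sum_univ_six]; norm_num
lemma cs_step_1_1 (l : List (Fin 2)) : cs (l ++ [1]) 1 = cs l 1 + cs l 5 := by
  rw [cs_concat, Fin.sum_univ_six]; norm_num
lemma cs_step_1_2 (l : List (Fin 2)) : cs (l ++ [1]) 2 = cs l 0 := by
  rw [cs_concat, Fin.sum_univ_six]; norm_num
lemma cs_step_1_3 (l : List (Fin 2)) : cs (l ++ [1]) 3 = cs l 2 := by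
  rw [cs_concat, Fin.sum_univ_six]; norm_num
lemma cs_step_1_4 (l : List (Fin 2)) : cs (l ++ [1]) 4 = cs l 4 := by
  rw [cs_concat, Fin.sum_univ_six]; norm_num
lemma cs_step_1_5 (l : List (Fin 2)) : cs (l ++ [1]) 5 = cs l 4 := by
  rw [cs_concat, Fin.sum_univ_six]; norm_num

lemma cs_nil (j : Fin 6) : cs [] j = 1 := by
  simp [cs, wprod, Matrix.one_apply, Finset.sum_ite_eq]

lemma cs_inv (l : List (Fin 2)) :
    cs l 4 = 1 ∧ cs l 5 = 1 ∧ ∀ j, cs l j ≤ l.length + 1 := by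
  induction l using List.reverseRecOn with
  | nil => exact ⟨cs_nil 4, cs_nil 5, fun j => by rw [cs_nil]; norm_num⟩
  | append_singleton l c ih =>
      obtain ⟨h4, h5, hb⟩ := ih
      have h0 := hb 0; have h1 := hb 1; have h2 := hb 2; have h3 := hb 3
      have hlen : ((l ++ [c]).length : ℝ) = l.length + 1 := by
        simp
      fin_cases c
      · refine ⟨(cs_step_0_4 l).trans h4, (cs_step_0_5 l).trans h5, fun j => ?_⟩
        fin_cases j
        · refine le_of_eq_of_le (cs_step_0_0 l) ?_; rw [hlen]; linarith
        · refine le_of_eq_of_le (cs_step_0_1 l) ?_; rw [hlen]; linarith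
        · refine le_of_eq_of_le (cs_step_0_2 l) ?_; rw [hlen]; linarith
        · refine le_of_eq_of_le (cs_step_0_3 l) ?_; rw [hlen]; linarith
        · refine le_of_eq_of_le (cs_step_0_4 l) ?_; rw [hlen]; linarith
        · refine le_of_eq_of_le (cs_step_0_5 l) ?_; rw [hlen]; linarith
      · refine ⟨(cs_step_1_4 l).trans h4, (cs_step_1_5 l).trans h4, fun j => ?_⟩
        fin_cases j
        · refine le_of_eq_of_le (cs_step_1_0 l) ?_; rw [hlen]; linarith
        · refine le_of_eq_of_le (cs_step_1_1 l) ?_; rw [hlen]; linarith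
        · refine le_of_eq_of_le (cs_step_1_2 l) ?_; rw [hlen]; linarith
        · refine le_of_eq_of_le (cs_step_1_3 l) ?_; rw [hlen]; linarith
        · refine le_of_eq_of_le (cs_step_1_4 l) ?_; rw [hlen]; linarith
        · refine le_of_eq_of_le (cs_step_1_5 l) ?_; rw [hlen]; linarith

lemma cs_replicate (T : ℕ) : cs (List.replicate T 1) 1 = T + 1 := by
  induction T with
  | zero => simp [cs_nil]
  | succ T ih =>
      rw [List.replicate_succ' (n := T), cs_step_1_1, ih,
        (cs_inv (List.replicate T 1)).2.1]
      push_cast; ring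

lemma colSum_wprod (l : List (Fin 2)) :
    colSumNorm (wprod l) = Finset.univ.sup' Finset.univ_nonempty (cs l) := by
  unfold colSumNorm
  refine Finset.sup'_congr _ rfl fun j _ => ?_
  unfold cs
  exact Finset.sum_congr rfl fun i _ => abs_of_nonneg (wprod_nonneg l i j)

lemma ofFn_eq (T : ℕ) (w : Fin T → Fin 2) :
    (List.ofFn fun i => dichoA (w i)).prod = wprod (List.ofFn w) := by
  rw [wprod, List.map_ofFn]
  rfl

lemma dichoMax_eq (T : ℕ) : dichoMax T = T + 1 := by
  apply le_antisymm
  · apply Finset.sup'_le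
    intro w _
    rw [ofFn_eq, colSum_wprod]
    apply Finset.sup'_le
    intro j _
    have := (cs_inv (List.ofFn w)).2.2 j
    simpa using this
  · have h1 : colSumNorm (List.ofFn fun i : Fin T => dichoA ((fun _ : Fin T => (1 : Fin 2)) i)).prod
        ≥ (T : ℝ) + 1 := by
      rw [ofFn_eq, colSum_wprod]
      have : (List.ofFn fun _ : Fin T => (1 : Fin 2)) = List.replicate T 1 :=
        List.ofFn_const T 1
      rw [this]
      calc ((T : ℝ) + 1) = cs (List.replicate T 1) 1 := (cs_replicate T).symm
        _ ≤ _ := Finset.le_sup' _ (Finset.mem_univ _)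
    calc ((T : ℝ) + 1) ≤ _ := h1
      _ ≤ dichoMax T := by
          rw [dichoMax]
          exact Finset.le_sup'
            (fun w : Fin T → Fin 2 => colSumNorm (List.ofFn fun i => dichoA (w i)).prod)
            (Finset.mem_univ (fun _ : Fin T => (1 : Fin 2)))

theorem dichopile_max_norm_and_jsr :
    (∀ T : ℕ, 1 ≤ T → dichoMax T = T + 1) ∧
    Filter.Tendsto (fun T : ℕ => dichoMax T ^ ((1 : ℝ) / T))
      Filter.atTop (nhds 1) := by
  constructor
  · exact fun T _ => dichoMax_eq T
  · have hlog : Filter.Tendsto (fun T : ℕ => Real.log ((T : ℝ) + 1) * ((1 : ℝ) / T))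
        Filter.atTop (nhds 0) := by
      have ha : Filter.Tendsto (fun T : ℕ => Real.log ((T : ℝ) + 1) / ((T : ℝ) + 1))
          Filter.atTop (nhds 0) := by
        apply (Real.isLittleO_log_id_atTop.tendsto_div_nhds_zero).comp
        exact Filter.tendsto_atTop_add_const_right _ 1 tendsto_natCast_atTop_atTop
      have hb : Filter.Tendsto (fun T : ℕ => ((T : ℝ) + 1) / T) Filter.atTop (nhds 1) := by
        have : Filter.Tendsto (fun T : ℕ => 1 + (1 : ℝ) / T) Filter.atTop (nhds (1 + 0)) :=
          (tendsto_const_nhds).add tendsto_one_div_atTop_nhds_zero_nat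
        rw [add_zero] at this
        apply this.congr'
        filter_upwards [Filter.eventually_ge_atTop 1] with T hT
        have hT0 : (T : ℝ) ≠ 0 := by positivity
        field_simp
      have := ha.mul hb
      rw [zero_mul] at this
      apply this.congr'
      filter_upwards [Filter.eventually_ge_atTop 1] with T hT
      have hT0 : (T : ℝ) ≠ 0 := by
        have : (1:ℕ) ≤ T := hT
        positivity
      have hT1 : (T : ℝ) + 1 ≠ 0 := by positivity
      field_simp
    have hexp : Filter.Tendsto (fun T : ℕ =>
        Real.exp (Real.log ((T : ℝ) + 1) * ((1 : ℝ) / T))) Filter.atTop (nhds 1) := by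
      have := (Real.continuous_exp.tendsto 0).comp hlog
      simpa [Function.comp_def] using this
    apply hexp.congr'
    filter_upwards [Filter.eventually_ge_atTop 1] with T hT
    rw [dichoMax_eq T]
    rw [Real.rpow_def_of_pos (by positivity)]
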